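/- Let (G, ≤) be a finite set P of 'cycles' equipped with a relation ⪯ defined from activation times as follows: η ⪯ η' iff there is a chain η = η⁰, η¹, …, ηⁿ = η' in P such that consecutive cycles share a vertex at which the activation time of the earlier cycle is at most that of the later one. Suppose ⪯ is a partial order on P (P is a 'proper cycle partition'). Then any two proper cycle partitions of the same finite set Π of Poisson edges are equal; i.e., the proper cycle partition is unique. -/

import Mathlib

open scoped Classical

namespace BKT

/-- A Poisson edge: a directed edge of a graph on `V` decorated with a time. -/
abbrev PEdge (V : Type*) := (V × V) × ℝ

variable {V : Type*}

/-- The edges of `Π` going out of `x`. -/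
noncomputable def outEdges (Pi : Finset (PEdge V)) (x : V) : Finset (PEdge V) :=
  Pi.filter (fun e => e.1.1 = x)

/-- The edges of `Π` coming into `x`. -/
noncomputable def inEdges (Pi : Finset (PEdge V)) (x : V) : Finset (PEdge V) :=
  Pi.filter (fun e => e.1.2 = x)

/-- `Π` is balanced: at every vertex the in-degree equals the out-degree. -/
def Balanced (Pi : Finset (PEdge V)) : Prop :=
  ∀ x : V, (outEdges Pi x).card = (inEdges Pi x).card

/-- All times of the Poisson edges of `Π` are distinct. -/
def DistinctTimes (Pi : Finset (PEdge V)) : Prop :=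
  ∀ e ∈ Pi, ∀ e' ∈ Pi, e.2 = e'.2 → e = e'

/-- The edge `e` touches the vertex `x`. -/
def touches (e : PEdge V) (x : V) : Prop := e.1.1 = x ∨ e.1.2 = x

/-- The set of vertices incident to some edge of `η`. -/
noncomputable def verts (η : Finset (PEdge V)) : Finset V :=
  η.image (fun e => e.1.1) ∪ η.image (fun e => e.1.2)

/-- The edge set `η` is connected: no nontrivial split into two parts that do
not share a vertex. -/
def ConnectedEdges (η : Finset (PEdge V)) : Prop :=
  ∀ s ⊆ η, s.Nonempty → s ≠ η →
    ∃ e ∈ s, ∃ e' ∈ η \ s, ∃ x : V, touches e x ∧ touches e' x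

/-- `η` is a cycle: a nonempty connected set of Poisson edges in which every
visited vertex has in-degree and out-degree exactly one. -/
def IsCycle (η : Finset (PEdge V)) : Prop :=
  η.Nonempty ∧ ConnectedEdges η ∧
    ∀ x ∈ verts η, (outEdges η x).card = 1 ∧ (inEdges η x).card = 1

/-- `P` is a partition of `Π` into cycles. -/
def IsCyclePartition (Pi : Finset (PEdge V)) (P : Finset (Finset (PEdge V))) : Prop :=
  (∀ η ∈ P, IsCycle η) ∧ (∀ η ∈ P, η ⊆ Pi) ∧
    (∀ η ∈ P, ∀ η' ∈ P, η ≠ η' → Disjoint η η') ∧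
    (∀ e ∈ Pi, ∃ η ∈ P, e ∈ η)

/-- One step of the activation-time relation: `η` and `η'` share a vertex at
which the activation time of `η` is at most that of `η'`. -/
def stepRel (η η' : Finset (PEdge V)) : Prop :=
  ∃ e ∈ η, ∃ e' ∈ η', e.1.1 = e'.1.1 ∧ e.2 ≤ e'.2

/-- The relation `⪯` on a cycle partition `P`, generated by chains of cycles
in `P` with nondecreasing activation times at shared vertices. -/
def precRel (P : Finset (Finset (PEdge V))) (η η' : Finset (PEdge V)) : Prop :=
  Relation.ReflTransGen (fun a b => a ∈ P ∧ b ∈ P ∧ stepRel a b) η η'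

/-- `P` is a proper cycle partition of `Π`: a cycle partition on which `⪯`
is a partial order (i.e., antisymmetric). -/
def IsProperCyclePartition (Pi : Finset (PEdge V)) (P : Finset (Finset (PEdge V))) : Prop :=
  IsCyclePartition Pi P ∧
    ∀ η ∈ P, ∀ η' ∈ P, precRel P η η' → precRel P η' η → η = η'


/-! ### Auxiliary machinery for the uniqueness proof -/

lemma mem_outEdges {Pi : Finset (PEdge V)} {x : V} {e : PEdge V} :
    e ∈ outEdges Pi x ↔ e ∈ Pi ∧ e.1.1 = x := Finset.mem_filter

lemma mem_inEdges {Pi : Finset (PEdge V)} {x : V} {e : PEdge V} :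
    e ∈ inEdges Pi x ↔ e ∈ Pi ∧ e.1.2 = x := Finset.mem_filter

/-- A choice of an out-edge of minimal time at `x` (junk value if none). -/
noncomputable def minOut (Pi : Finset (PEdge V)) (x : V) : PEdge V :=
  if h : (outEdges Pi x).Nonempty then
    (Finset.exists_min_image (outEdges Pi x) (fun e => e.2) h).choose
  else ((x, x), 0)

lemma minOut_spec {Pi : Finset (PEdge V)} {x : V} (h : (outEdges Pi x).Nonempty) :
    minOut Pi x ∈ outEdges Pi x ∧ ∀ e ∈ outEdges Pi x, (minOut Pi x).2 ≤ e.2 := by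
  rw [minOut, dif_pos h]
  exact (Finset.exists_min_image (outEdges Pi x) (fun e => e.2) h).choose_spec

lemma minOut_mem {Pi : Finset (PEdge V)} {x : V} (h : (outEdges Pi x).Nonempty) :
    minOut Pi x ∈ Pi := (mem_outEdges.mp (minOut_spec h).1).1

lemma minOut_fst {Pi : Finset (PEdge V)} {x : V} (h : (outEdges Pi x).Nonempty) :
    (minOut Pi x).1.1 = x := (mem_outEdges.mp (minOut_spec h).1).2

/-- Follow the minimal-time out-edge. -/
noncomputable def nxt (Pi : Finset (PEdge V)) (x : V) : V := (minOut Pi x).1.2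

lemma nxt_out {Pi : Finset (PEdge V)} (hbal : Balanced Pi) {x : V}
    (h : (outEdges Pi x).Nonempty) : (outEdges Pi (nxt Pi x)).Nonempty := by
  have h1 : minOut Pi x ∈ inEdges Pi (nxt Pi x) :=
    mem_inEdges.mpr ⟨minOut_mem h, rfl⟩
  rw [← Finset.card_pos, hbal (nxt Pi x), Finset.card_pos]
  exact ⟨_, h1⟩

lemma sdiff_outEdges (Pi η : Finset (PEdge V)) (x : V) :
    outEdges (Pi \ η) x = outEdges Pi x \ outEdges η x := by
  ext e
  simp only [mem_outEdges, Finset.mem_sdiff, mem_outEdges]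
  tauto

lemma sdiff_inEdges (Pi η : Finset (PEdge V)) (x : V) :
    inEdges (Pi \ η) x = inEdges Pi x \ inEdges η x := by
  ext e
  simp only [mem_inEdges, Finset.mem_sdiff, mem_inEdges]
  tauto

lemma mem_verts_of_out {η : Finset (PEdge V)} {e : PEdge V} (he : e ∈ η) : e.1.1 ∈ verts η :=
  Finset.mem_union.mpr (Or.inl (Finset.mem_image.mpr ⟨e, he, rfl⟩))

lemma mem_verts_of_in {η : Finset (PEdge V)} {e : PEdge V} (he : e ∈ η) : e.1.2 ∈ verts η :=
  Finset.mem_union.mpr (Or.inr (Finset.mem_image.mpr ⟨e, he, rfl⟩))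

lemma balanced_sdiff {Pi η : Finset (PEdge V)} (hbal : Balanced Pi)
    (hη : IsCycle η) (hsub : η ⊆ Pi) : Balanced (Pi \ η) := by
  intro x
  have hosub : outEdges η x ⊆ outEdges Pi x := Finset.filter_subset_filter _ hsub
  have hisub : inEdges η x ⊆ inEdges Pi x := Finset.filter_subset_filter _ hsub
  rw [sdiff_outEdges, sdiff_inEdges, Finset.card_sdiff_of_subset hosub, Finset.card_sdiff_of_subset hisub, hbal x]
  congr 1
  by_cases hx : x ∈ verts η
  · rw [(hη.2.2 x hx).1, (hη.2.2 x hx).2]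
  · rw [Finset.eq_empty_of_forall_notMem (s := outEdges η x)
      (fun e he => hx ((mem_outEdges.mp he).2 ▸ mem_verts_of_out (mem_outEdges.mp he).1)),
      Finset.eq_empty_of_forall_notMem (s := inEdges η x)
      (fun e he => hx ((mem_inEdges.mp he).2 ▸ mem_verts_of_in (mem_inEdges.mp he).1))]

lemma proper_erase {Pi : Finset (PEdge V)} {P : Finset (Finset (PEdge V))}
    {η₀ : Finset (PEdge V)} (hP : IsProperCyclePartition Pi P) (hη₀ : η₀ ∈ P) :
    IsProperCyclePartition (Pi \ η₀) (P.erase η₀) := by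
  obtain ⟨⟨hcyc, hsub, hdisj, hcov⟩, hanti⟩ := hP
  refine ⟨⟨fun η hη => hcyc η (Finset.mem_of_mem_erase hη),
    fun η hη => ?_, fun η hη η' hη' hne => hdisj η (Finset.mem_of_mem_erase hη) η'
      (Finset.mem_of_mem_erase hη') hne, fun e he => ?_⟩, fun η hη η' hη' h h' => ?_⟩
  · have hηP := Finset.mem_of_mem_erase hη
    have hne := Finset.ne_of_mem_erase hη
    exact Finset.subset_sdiff.mpr ⟨hsub η hηP, hdisj η hηP η₀ hη₀ hne⟩
  · obtain ⟨he1, he2⟩ := Finset.mem_sdiff.mp he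
    obtain ⟨η, hηP, heη⟩ := hcov e he1
    refine ⟨η, Finset.mem_erase.mpr ⟨?_, hηP⟩, heη⟩
    rintro rfl; exact he2 heη
  · have mono : ∀ a b, precRel (P.erase η₀) a b → precRel P a b := by
      intro a b hab
      have hle : ∀ c d, (c ∈ P.erase η₀ ∧ d ∈ P.erase η₀ ∧ stepRel c d) →
          (c ∈ P ∧ d ∈ P ∧ stepRel c d) := fun c d hcd =>
        ⟨Finset.mem_of_mem_erase hcd.1, Finset.mem_of_mem_erase hcd.2.1, hcd.2.2⟩
      exact Relation.ReflTransGen.mono hle a b hab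
    exact hanti η (Finset.mem_of_mem_erase hη) η' (Finset.mem_of_mem_erase hη')
      (mono _ _ h) (mono _ _ h')

/-- Key lemma: a nonempty balanced edge set has a distinguished cycle which belongs
to **every** proper cycle partition. -/
lemma exists_univ_cycle (Pi : Finset (PEdge V)) (hbal : Balanced Pi) (hne : Pi.Nonempty) :
    ∃ η : Finset (PEdge V), IsCycle η ∧ η ⊆ Pi ∧
      ∀ P, IsProperCyclePartition Pi P → η ∈ P := by
  classical
  obtain ⟨e0, he0⟩ := hne
  set g := nxt Pi with hg
  set x0 := e0.1.1 with hx0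
  have hout0 : ∀ k, (outEdges Pi (g^[k] x0)).Nonempty := by
    intro k
    induction k with
    | zero => exact ⟨e0, mem_outEdges.mpr ⟨he0, rfl⟩⟩
    | succ k ih => rw [Function.iterate_succ_apply']; exact nxt_out hbal ih
  have htail : ∀ k, g^[k] x0 ∈ Pi.image (fun e => e.1.1) := by
    intro k
    obtain ⟨e, he⟩ := hout0 k
    exact Finset.mem_image.mpr ⟨e, (mem_outEdges.mp he).1, (mem_outEdges.mp he).2⟩
  obtain ⟨a, b, hab, heq⟩ : ∃ a b, a < b ∧ g^[a] x0 = g^[b] x0 := by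
    obtain ⟨a, -, b, -, hab, heq⟩ := Finset.exists_ne_map_eq_of_card_lt_of_maps_to
      (s := Finset.range ((Pi.image (fun e => e.1.1)).card + 1))
      (t := Pi.image (fun e => e.1.1)) (by simp) (fun k _ => htail k)
    rcases lt_or_gt_of_ne hab with h | h
    · exact ⟨a, b, h, heq⟩
    · exact ⟨b, a, h, heq.symm⟩
  set y := g^[a] x0 with hy
  set n := b - a with hnd
  have hn0 : 0 < n := by omega
  have hyper : g^[n] y = y := by
    rw [hy, ← Function.iterate_add_apply]
    have : n + a = b := by omega
    rw [this, ← heq]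
  have hmul : ∀ j, g^[n * j] y = y := by
    intro j
    rw [Function.iterate_mul]
    exact Function.iterate_fixed hyper j
  have hmod : ∀ k, g^[k] y = g^[k % n] y := by
    intro k
    conv_lhs => rw [← Nat.mod_add_div k n]
    rw [Function.iterate_add_apply, hmul]
  set C : Finset V := (Finset.range n).image (fun k => g^[k] y) with hC
  have hyC : y ∈ C := Finset.mem_image.mpr ⟨0, Finset.mem_range.mpr hn0, rfl⟩
  have hCiter : ∀ k, g^[k] y ∈ C := fun k =>
    Finset.mem_image.mpr ⟨k % n, Finset.mem_range.mpr (Nat.mod_lt _ hn0), (hmod k).symm⟩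
  have hCg : ∀ x ∈ C, g x ∈ C := by
    intro x hx
    obtain ⟨k, -, rfl⟩ := Finset.mem_image.mp hx
    have h := hCiter (k + 1)
    rwa [Function.iterate_succ_apply'] at h
  have hCout : ∀ x ∈ C, (outEdges Pi x).Nonempty := by
    intro x hx
    obtain ⟨k, -, rfl⟩ := Finset.mem_image.mp hx
    rw [hy, ← Function.iterate_add_apply]
    exact hout0 _
  have hCsurj : ∀ x ∈ C, ∃ z ∈ C, g z = x := by
    intro x hx
    obtain ⟨k, hk, rfl⟩ := Finset.mem_image.mp hx
    refine ⟨g^[k + n - 1] y, hCiter _, ?_⟩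
    have h4 : (k + n - 1).succ = k + n := by omega
    rw [← Function.iterate_succ_apply' g (k + n - 1) y, h4, Function.iterate_add_apply, hyper]
  have himg : C.image g = C := by
    apply Finset.Subset.antisymm
    · intro x hx
      obtain ⟨z, hz, rfl⟩ := Finset.mem_image.mp hx
      exact hCg z hz
    · intro x hx
      obtain ⟨z, hz, hzx⟩ := hCsurj x hx
      exact Finset.mem_image.mpr ⟨z, hz, hzx⟩
  have hinj : Set.InjOn g C := by
    apply Finset.injOn_of_card_image_eq
    rw [himg]
  set m : V → PEdge V := minOut Pi with hm
  have hmfst : ∀ x ∈ C, (m x).1.1 = x := fun x hx => minOut_fst (hCout x hx)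
  have hmsnd : ∀ x ∈ C, (m x).1.2 = g x := fun x hx => rfl
  have hmPi : ∀ x ∈ C, m x ∈ Pi := fun x hx => minOut_mem (hCout x hx)
  set ηC : Finset (PEdge V) := C.image m with hηC
  have hηCsub : ηC ⊆ Pi := by
    intro e he
    obtain ⟨x, hx, rfl⟩ := Finset.mem_image.mp he
    exact hmPi x hx
  have hmemηC : ∀ x ∈ C, m x ∈ ηC := fun x hx => Finset.mem_image.mpr ⟨x, hx, rfl⟩
  -- out/in edges of ηC
  have houtηC : ∀ x ∈ C, outEdges ηC x = {m x} := by
    intro x hx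
    ext e
    simp only [mem_outEdges, Finset.mem_singleton]
    constructor
    · rintro ⟨he, hex⟩
      obtain ⟨z, hz, rfl⟩ := Finset.mem_image.mp he
      rw [hmfst z hz] at hex
      rw [hex]
    · rintro rfl
      exact ⟨hmemηC x hx, hmfst x hx⟩
  have hinηC : ∀ x ∈ C, ∃ z ∈ C, g z = x ∧ inEdges ηC x = {m z} := by
    intro x hx
    obtain ⟨z, hz, hzx⟩ := hCsurj x hx
    refine ⟨z, hz, hzx, ?_⟩
    ext e
    simp only [mem_inEdges, Finset.mem_singleton]
    constructor
    · rintro ⟨he, hex⟩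
      obtain ⟨w, hw, rfl⟩ := Finset.mem_image.mp he
      have : g w = x := hex
      have : w = z := hinj hw hz (by rw [this, hzx])
      rw [this]
    · rintro rfl
      exact ⟨hmemηC z hz, hzx⟩
  have hvertsηC : verts ηC = C := by
    apply Finset.Subset.antisymm
    · intro x hx
      rcases Finset.mem_union.mp hx with h | h
      · obtain ⟨e, he, rfl⟩ := Finset.mem_image.mp h
        obtain ⟨z, hz, rfl⟩ := Finset.mem_image.mp he
        rw [hmfst z hz]; exact hz
      · obtain ⟨e, he, rfl⟩ := Finset.mem_image.mp h
        obtain ⟨z, hz, rfl⟩ := Finset.mem_image.mp he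
        exact hCg z hz
    · intro x hx
      have := hmemηC x hx
      have h2 := hmfst x hx
      exact h2 ▸ mem_verts_of_out this
  -- ηC is a cycle
  have hcycηC : IsCycle ηC := by
    refine ⟨⟨m y, hmemηC y hyC⟩, ?_, ?_⟩
    · -- connectivity
      intro s hs hsne hsneq
      set A : Finset V := s.image (fun e => e.1.1) with hA
      have hAC : A ⊆ C := by
        intro x hx
        obtain ⟨e, he, rfl⟩ := Finset.mem_image.mp hx
        obtain ⟨z, hz, rfl⟩ := Finset.mem_image.mp (hs he)
        rw [hmfst z hz]; exact hz
      have hAmem : ∀ x ∈ A, m x ∈ s := by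
        intro x hx
        obtain ⟨e, he, rfl⟩ := Finset.mem_image.mp hx
        obtain ⟨z, hz, rfl⟩ := Finset.mem_image.mp (hs he)
        rw [hmfst z hz]; exact he
      by_cases hstab : ∀ x ∈ A, g x ∈ A
      · exfalso
        have hAiter : ∀ x ∈ A, ∀ k, g^[k] x ∈ A := by
          intro x hx k
          induction k with
          | zero => exact hx
          | succ k ih => rw [Function.iterate_succ_apply']; exact hstab _ ih
        obtain ⟨e1, he1⟩ := hsne
        have hx1 : e1.1.1 ∈ A := Finset.mem_image.mpr ⟨e1, he1, rfl⟩
        obtain ⟨k, hk, hkx⟩ := Finset.mem_image.mp (hAC hx1)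
        have hkx' : g^[k] y = e1.1.1 := hkx
        have hyA : y ∈ A := by
          have := hAiter _ hx1 (n - k)
          rw [← hkx', ← Function.iterate_add_apply] at this
          have h3 : n - k + k = n := by
            have := Finset.mem_range.mp hk; omega
          rw [h3, hyper] at this
          exact this
        have hCA : C ⊆ A := by
          intro x hx
          obtain ⟨j, -, rfl⟩ := Finset.mem_image.mp hx
          exact hAiter y hyA j
        apply hsneq
        apply Finset.Subset.antisymm hs
        intro e he
        obtain ⟨z, hz, rfl⟩ := Finset.mem_image.mp he
        exact hAmem z (hCA hz)
      · push_neg at hstab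
        obtain ⟨x, hxA, hgxA⟩ := hstab
        have hxC := hAC hxA
        have hgxC := hCg x hxC
        refine ⟨m x, hAmem x hxA, m (g x), Finset.mem_sdiff.mpr ⟨hmemηC _ hgxC, ?_⟩,
          g x, Or.inr (hmsnd x hxC), Or.inl (hmfst _ hgxC)⟩
        intro hmem
        exact hgxA (Finset.mem_image.mpr ⟨m (g x), hmem, hmfst _ hgxC⟩)
    · intro x hx
      rw [hvertsηC] at hx
      obtain ⟨z, hz, hzx, hin⟩ := hinηC x hx
      rw [houtηC x hx, hin]
      simp
  refine ⟨ηC, hcycηC, hηCsub, ?_⟩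
  -- membership in every proper partition
  rintro P ⟨⟨hPcyc, hPsub, hPdisj, hPcov⟩, hPanti⟩
  have hch : ∀ x, ∃ η, x ∈ C → η ∈ P ∧ m x ∈ η := by
    intro x
    by_cases hx : x ∈ C
    · obtain ⟨η, hη, hmη⟩ := hPcov (m x) (hmPi x hx)
      exact ⟨η, fun _ => ⟨hη, hmη⟩⟩
    · exact ⟨∅, fun h => absurd h hx⟩
  choose F hF using hch
  have hstep : ∀ x ∈ C, F (g x) ∈ P ∧ F x ∈ P ∧ stepRel (F (g x)) (F x) := by
    intro x hx
    have hgx := hCg x hx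
    obtain ⟨hFP, hmF⟩ := hF x hx
    obtain ⟨hFP', hmF'⟩ := hF (g x) hgx
    have hv : g x ∈ verts (F x) := hmsnd x hx ▸ mem_verts_of_in hmF
    obtain ⟨hout1, -⟩ := (hPcyc _ hFP).2.2 _ hv
    obtain ⟨e, he⟩ := Finset.card_eq_one.mp hout1
    have heo : e ∈ outEdges (F x) (g x) := he ▸ Finset.mem_singleton_self e
    obtain ⟨heF, hetail⟩ := mem_outEdges.mp heo
    have hePi : e ∈ Pi := hPsub _ hFP heF
    have hle : (m (g x)).2 ≤ e.2 :=
      (minOut_spec (hCout _ hgx)).2 e (mem_outEdges.mpr ⟨hePi, hetail⟩)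
    exact ⟨hFP', hFP, m (g x), hmF', e, heF, by rw [hmfst _ hgx, hetail], hle⟩
  have hchain : ∀ a b : ℕ, precRel P (F (g^[a + b] y)) (F (g^[b] y)) := by
    intro a
    induction a with
    | zero => intro b; simp only [Nat.zero_add]; exact Relation.ReflTransGen.refl
    | succ a ih =>
      intro b
      have h1 : a + 1 + b = (a + b) + 1 := by omega
      rw [h1]
      have h2 := hstep (g^[a + b] y) (hCiter _)
      rw [← Function.iterate_succ_apply' g (a + b) y] at h2
      exact Relation.ReflTransGen.head ⟨h2.1, h2.2.1, h2.2.2⟩ (ih b)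
  have hFall : ∀ k, F (g^[k] y) = F y := by
    intro k
    have h1 : precRel P (F (g^[k] y)) (F y) := by simpa using hchain k 0
    have h2 : precRel P (F y) (F (g^[k] y)) := by
      have h3 := hchain (n - k % n) (k % n)
      rw [Nat.sub_add_cancel (le_of_lt (Nat.mod_lt _ hn0)), hyper, ← hmod k] at h3
      exact h3
    exact hPanti _ (hF _ (hCiter k)).1 _ (hF y hyC).1 h1 h2
  have hFyP : F y ∈ P := (hF y hyC).1
  have hsubηC : ηC ⊆ F y := by
    intro e he
    obtain ⟨x, hx, rfl⟩ := Finset.mem_image.mp he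
    obtain ⟨k, -, rfl⟩ := Finset.mem_image.mp hx
    have := (hF _ (hCiter k)).2
    rwa [hFall k] at this
  have hcycFy := hPcyc _ hFyP
  have hyEq : F y = ηC := by
    by_contra hne'
    obtain ⟨e, heηC, e', he', x, hte, hte'⟩ :=
      hcycFy.2.1 ηC hsubηC ⟨m y, hmemηC y hyC⟩ (fun h => hne' h.symm)
    obtain ⟨z, hz, rfl⟩ := Finset.mem_image.mp heηC
    have hxC : x ∈ C := by
      rcases hte with h | h
      · rw [hmfst z hz] at h; exact h ▸ hz
      · rw [hmsnd z hz] at h; exact h ▸ hCg z hz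
    obtain ⟨he'F, he'ηC⟩ := Finset.mem_sdiff.mp he'
    rcases hte' with h | h
    · -- e' leaves x ∈ C; so does m x, contradiction with out-degree 1
      have hxv : x ∈ verts (F y) := h ▸ mem_verts_of_out he'F
      have hcard := (hcycFy.2.2 x hxv).1
      have hmx : m x ∈ outEdges (F y) x :=
        mem_outEdges.mpr ⟨hsubηC (hmemηC x hxC), hmfst x hxC⟩
      have he'o : e' ∈ outEdges (F y) x := mem_outEdges.mpr ⟨he'F, h⟩
      have : e' = m x := by
        have := Finset.card_le_one.mp (le_of_eq hcard) _ he'o _ hmx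
        exact this
      exact he'ηC (this ▸ hmemηC x hxC)
    · have hxv : x ∈ verts (F y) := h ▸ mem_verts_of_in he'F
      have hcard := (hcycFy.2.2 x hxv).2
      obtain ⟨w, hw, hwx⟩ := hCsurj x hxC
      have hmw : m w ∈ inEdges (F y) x :=
        mem_inEdges.mpr ⟨hsubηC (hmemηC w hw), by rw [hmsnd w hw, hwx]⟩
      have he'i : e' ∈ inEdges (F y) x := mem_inEdges.mpr ⟨he'F, h⟩
      have : e' = m w := Finset.card_le_one.mp (le_of_eq hcard) _ he'i _ hmw
      exact he'ηC (this ▸ hmemηC w hw)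
  rw [← hyEq]
  exact hFyP

/-- Uniqueness of the proper cycle partition: any two proper cycle partitions
of the same finite balanced set of Poisson edges with distinct times coincide. -/
theorem properCyclePartition_unique
    (Pi : Finset (PEdge V)) (hdist : DistinctTimes Pi) (hbal : Balanced Pi)
    (P Q : Finset (Finset (PEdge V)))
    (hP : IsProperCyclePartition Pi P) (hQ : IsProperCyclePartition Pi Q) :
    P = Q := by
  obtain ⟨n, hn⟩ : ∃ n, Pi.card = n := ⟨_, rfl⟩
  induction n using Nat.strong_induction_on generalizing Pi P Q with
  | _ n ih =>
  rcases Finset.eq_empty_or_nonempty Pi with rfl | hne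
  · have empty_part : ∀ R : Finset (Finset (PEdge V)),
        IsProperCyclePartition (∅ : Finset (PEdge V)) R → R = ∅ := by
      intro R hR
      apply Finset.eq_empty_of_forall_notMem
      intro η hη
      obtain ⟨e, he⟩ := (hR.1.1 η hη).1
      exact absurd (hR.1.2.1 η hη he) (Finset.notMem_empty e)
    rw [empty_part P hP, empty_part Q hQ]
  · obtain ⟨η, hηcyc, hηsub, hηmem⟩ := exists_univ_cycle Pi hbal hne
    have hmemP := hηmem P hP
    have hmemQ := hηmem Q hQ
    have hcard : (Pi \ η).card < n := by
      rw [← hn, Finset.card_sdiff_of_subset hηsub]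
      exact Nat.sub_lt (Finset.card_pos.mpr hne) (Finset.card_pos.mpr hηcyc.1)
    have hdist' : DistinctTimes (Pi \ η) := fun e he e' he' h =>
      hdist e (Finset.mem_sdiff.mp he).1 e' (Finset.mem_sdiff.mp he').1 h
    have hkey := ih _ hcard (Pi \ η) hdist' (balanced_sdiff hbal hηcyc hηsub)
      (P.erase η) (Q.erase η) (proper_erase hP hmemP) (proper_erase hQ hmemQ) rfl
    calc P = insert η (P.erase η) := (Finset.insert_erase hmemP).symm
      _ = insert η (Q.erase η) := by rw [hkey]
      _ = Q := Finset.insert_erase hmemQ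

end BKT
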